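/- arXiv:1011.1643 — 4 statements merged into one kernel-verified Lean document; each statement's English description precedes it below -/
import Mathlib

section
/- For every τ in the upper half-plane, the Jacobi identity ϑ₃(τ)⁴ = ϑ₂(τ)⁴ + ϑ₄(τ)⁴ holds. -/
open Complex

noncomputable def thetaC2 (τ : ℂ) : ℂ :=
  ∑' k : ℤ, Complex.exp (((k : ℂ) + 1 / 2) ^ 2 * (Real.pi : ℂ) * I * τ)

noncomputable def thetaC3 (τ : ℂ) : ℂ :=
  ∑' k : ℤ, Complex.exp ((k : ℂ) ^ 2 * (Real.pi : ℂ) * I * τ)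

noncomputable def thetaC4 (τ : ℂ) : ℂ :=
  ∑' k : ℤ, (-1 : ℂ) ^ k * Complex.exp ((k : ℂ) ^ 2 * (Real.pi : ℂ) * I * τ)

namespace JacobiAux

noncomputable def f (τ : ℂ) (n : ℤ) : ℂ :=
  Complex.exp ((n : ℂ) ^ 2 * (Real.pi : ℂ) * I * τ)

noncomputable def g (τ : ℂ) (n : ℤ) : ℂ :=
  Complex.exp (((n : ℂ) + 1 / 2) ^ 2 * (Real.pi : ℂ) * I * τ)

noncomputable def h (τ : ℂ) (n : ℤ) : ℂ := (-1 : ℂ) ^ n * f τ n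

lemma norm_f (τ : ℂ) (n : ℤ) :
    ‖f τ n‖ = Real.exp (-(Real.pi * (n : ℝ) ^ 2 * τ.im)) := by
  rw [f, Complex.norm_exp]
  congr 1
  have : (n : ℂ) ^ 2 * (Real.pi : ℂ) * I * τ
      = ((Real.pi * (n : ℝ) ^ 2 : ℝ) : ℂ) * τ * I := by push_cast; ring
  rw [this, mul_I_re, im_ofReal_mul]

lemma norm_g (τ : ℂ) (n : ℤ) :
    ‖g τ n‖ = Real.exp (-(Real.pi * ((n : ℝ) + 1 / 2) ^ 2 * τ.im)) := by
  rw [g, Complex.norm_exp]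
  congr 1
  have : ((n : ℂ) + 1 / 2) ^ 2 * (Real.pi : ℂ) * I * τ
      = ((Real.pi * ((n : ℝ) + 1 / 2) ^ 2 : ℝ) : ℂ) * τ * I := by push_cast; ring
  rw [this, mul_I_re, im_ofReal_mul]

lemma norm_h (τ : ℂ) (n : ℤ) : ‖h τ n‖ = ‖f τ n‖ := by
  rw [h, norm_mul, norm_zpow, norm_neg, norm_one, one_zpow, one_mul]

lemma summable_norm_f {τ : ℂ} (hτ : 0 < τ.im) :
    Summable fun n : ℤ => ‖f τ n‖ := by
  refine (summable_pow_mul_jacobiTheta₂_term_bound 0 hτ 0).of_nonneg_of_le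
    (fun n => norm_nonneg _) (fun n => ?_)
  rw [norm_f]
  simp only [pow_zero, one_mul]
  apply le_of_eq
  congr 1
  push_cast
  ring

lemma summable_norm_g {τ : ℂ} (hτ : 0 < τ.im) :
    Summable fun n : ℤ => ‖g τ n‖ := by
  refine (summable_pow_mul_jacobiTheta₂_term_bound τ.im hτ 0).of_nonneg_of_le
    (fun n => norm_nonneg _) (fun n => ?_)
  rw [norm_g]
  simp only [pow_zero, one_mul]
  push_cast
  refine Real.exp_le_exp.mpr ?_
  have h1 : -((n : ℝ)) ≤ |(n : ℝ)| := neg_le_abs _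
  have h2 : (0:ℝ) ≤ (n : ℝ) + 2 * |(n : ℝ)| := by
    have := abs_nonneg ((n : ℝ)); linarith
  nlinarith [mul_pos Real.pi_pos hτ]

lemma summable_norm_h {τ : ℂ} (hτ : 0 < τ.im) :
    Summable fun n : ℤ => ‖h τ n‖ := by
  simpa only [norm_h] using summable_norm_f hτ

/-- Expansion of a fourth power of a tsum as a quadruple sum. -/
lemma pow_four_eq {u : ℤ → ℂ} (hu : Summable fun n => ‖u n‖) :
    (∑' n : ℤ, u n) ^ 4
      = ∑' p : (ℤ × ℤ) × ℤ × ℤ, u p.1.1 * u p.1.2 * (u p.2.1 * u p.2.2) := by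
  have h2 := tsum_mul_tsum_of_summable_norm hu hu
  have h2n := hu.mul_norm hu
  have h4 := tsum_mul_tsum_of_summable_norm h2n h2n
  calc (∑' n : ℤ, u n) ^ 4
      = ((∑' n : ℤ, u n) * ∑' n : ℤ, u n) * ((∑' n : ℤ, u n) * ∑' n : ℤ, u n) := by ring
    _ = (∑' z : ℤ × ℤ, u z.1 * u z.2) * ∑' z : ℤ × ℤ, u z.1 * u z.2 := by rw [h2]
    _ = _ := h4

noncomputable def Fq (τ : ℂ) (p : (ℤ × ℤ) × ℤ × ℤ) : ℂ :=
  f τ p.1.1 * f τ p.1.2 * (f τ p.2.1 * f τ p.2.2)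

noncomputable def Gq (τ : ℂ) (p : (ℤ × ℤ) × ℤ × ℤ) : ℂ :=
  g τ p.1.1 * g τ p.1.2 * (g τ p.2.1 * g τ p.2.2)

noncomputable def Hq (τ : ℂ) (p : (ℤ × ℤ) × ℤ × ℤ) : ℂ :=
  h τ p.1.1 * h τ p.1.2 * (h τ p.2.1 * h τ p.2.2)

/-- Parity splitting equiv : `(ε, (a,b,c,m)) ↦ ((a,b),(c, a+b+c+2m+ε))`. -/
def Ω : Bool × (ℤ × ℤ × ℤ × ℤ) ≃ (ℤ × ℤ) × ℤ × ℤ where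
  toFun x := ((x.2.1, x.2.2.1), (x.2.2.2.1,
    x.2.1 + x.2.2.1 + x.2.2.2.1 + 2 * x.2.2.2.2 + (if x.1 then 1 else 0)))
  invFun p := (decide ((p.2.2 - p.1.1 - p.1.2 - p.2.1) % 2 = 1),
    (p.1.1, p.1.2, p.2.1, (p.2.2 - p.1.1 - p.1.2 - p.2.1) / 2))
  left_inv := by
    rintro ⟨ε, a, b, c, m⟩
    cases ε <;> simp <;> omega
  right_inv := by
    rintro ⟨⟨a, b⟩, c, d⟩
    dsimp only
    refine Prod.ext rfl (Prod.ext rfl ?_)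
    by_cases hd : (d - a - b - c) % 2 = 1
    · rw [if_pos (by simp [hd])]
      show a + b + c + 2 * ((d - a - b - c) / 2) + 1 = d
      omega
    · rw [if_neg (by simp [hd])]
      show a + b + c + 2 * ((d - a - b - c) / 2) + 0 = d
      omega

lemma Ω_false (v : ℤ × ℤ × ℤ × ℤ) :
    Ω (false, v) = ((v.1, v.2.1), (v.2.2.1, v.1 + v.2.1 + v.2.2.1 + 2 * v.2.2.2)) := by
  simp [Ω]

lemma Ω_true (v : ℤ × ℤ × ℤ × ℤ) :
    Ω (true, v) = ((v.1, v.2.1), (v.2.2.1, v.1 + v.2.1 + v.2.2.1 + 2 * v.2.2.2 + 1)) := by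
  simp [Ω]

lemma Hq_eq (τ : ℂ) (p : (ℤ × ℤ) × ℤ × ℤ) :
    Hq τ p = (-1 : ℂ) ^ (p.1.1 + p.1.2 + p.2.1 + p.2.2) * Fq τ p := by
  simp only [Hq, Fq, h, zpow_add₀ (show (-1 : ℂ) ≠ 0 by norm_num)]
  ring

lemma g_neg (τ : ℂ) (n : ℤ) : g τ (-n - 1) = g τ n := by
  rw [g, g]
  congr 1
  push_cast
  ring

/-- Sign-flip equiv exchanging the two parity classes for `Gq`. -/
def ψ : (ℤ × ℤ × ℤ × ℤ) ≃ (ℤ × ℤ × ℤ × ℤ) where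
  toFun v := (-v.1 - 1, v.2.1, v.2.2.1, v.1 + v.2.2.2)
  invFun v := (-v.1 - 1, v.2.1, v.2.2.1, v.2.2.2 + v.1 + 1)
  left_inv := by
    rintro ⟨a, b, c, m⟩
    refine Prod.ext ?_ (Prod.ext ?_ (Prod.ext ?_ ?_)) <;> simp <;> omega
  right_inv := by
    rintro ⟨a, b, c, m⟩
    refine Prod.ext ?_ (Prod.ext ?_ (Prod.ext ?_ ?_)) <;> simp <;> omega

/-- The Hadamard-matrix equiv carrying odd integer quadruples to even ones. -/
def φ : (ℤ × ℤ × ℤ × ℤ) ≃ (ℤ × ℤ × ℤ × ℤ) where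
  toFun v := (v.1 + v.2.1 + v.2.2.1 + v.2.2.2,
    -v.2.2.1 - v.2.2.2 - 1, -v.2.1 - v.2.2.2 - 1, v.2.2.2 + 1)
  invFun v := (v.1 + v.2.1 + v.2.2.1 + v.2.2.2 + 1,
    -v.2.2.1 - v.2.2.2, -v.2.1 - v.2.2.2, v.2.2.2 - 1)
  left_inv := by
    rintro ⟨a, b, c, m⟩
    refine Prod.ext ?_ (Prod.ext ?_ (Prod.ext ?_ ?_)) <;> simp <;> omega
  right_inv := by
    rintro ⟨a, b, c, m⟩
    refine Prod.ext ?_ (Prod.ext ?_ (Prod.ext ?_ ?_)) <;> simp <;> omega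

lemma split (u : ((ℤ × ℤ) × ℤ × ℤ) → ℂ) (hu : Summable u) :
    ∑' p, u p = (∑' v, u (Ω (false, v))) + ∑' v, u (Ω (true, v)) := by
  have hs : Summable fun x : Bool × (ℤ × ℤ × ℤ × ℤ) => u (Ω x) := Ω.summable_iff.mpr hu
  rw [← Ω.tsum_eq u, Summable.tsum_prod hs, tsum_bool]

lemma Hq_false (τ : ℂ) (v : ℤ × ℤ × ℤ × ℤ) :
    Hq τ (Ω (false, v)) = Fq τ (Ω (false, v)) := by
  obtain ⟨a, b, c, m⟩ := v
  simp only [Hq_eq, Ω_false]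
  rw [Even.neg_one_zpow ⟨a + b + c + m, by ring⟩, one_mul]

lemma Hq_true (τ : ℂ) (v : ℤ × ℤ × ℤ × ℤ) :
    Hq τ (Ω (true, v)) = -Fq τ (Ω (true, v)) := by
  obtain ⟨a, b, c, m⟩ := v
  simp only [Hq_eq, Ω_true]
  rw [Odd.neg_one_zpow ⟨a + b + c + m, by ring⟩, neg_one_mul]

lemma Gq_psi (τ : ℂ) (v : ℤ × ℤ × ℤ × ℤ) :
    Gq τ (Ω (true, ψ v)) = Gq τ (Ω (false, v)) := by
  obtain ⟨a, b, c, m⟩ := v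
  simp only [Gq, Ω_true, Ω_false, ψ, Equiv.coe_fn_mk]
  rw [show -a - 1 + b + c + 2 * (a + m) + 1 = a + b + c + 2 * m by ring,
    show (-a - 1 : ℤ) = -a - 1 from rfl, g_neg]

lemma Gq_phi (τ : ℂ) (v : ℤ × ℤ × ℤ × ℤ) :
    Gq τ (Ω (false, φ v)) = Fq τ (Ω (true, v)) := by
  obtain ⟨a, b, c, m⟩ := v
  simp only [Gq, Fq, Ω_true, Ω_false, φ, Equiv.coe_fn_mk]
  rw [g, g, g, g, f, f, f, f, ← Complex.exp_add, ← Complex.exp_add, ← Complex.exp_add,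
    ← Complex.exp_add, ← Complex.exp_add, ← Complex.exp_add]
  congr 1
  push_cast
  ring

end JacobiAux

open JacobiAux in
/-- Jacobi's identity ϑ₃⁴ = ϑ₂⁴ + ϑ₄⁴. -/
theorem jacobi_identity (τ : ℂ) (hτ : 0 < τ.im) :
    thetaC3 τ ^ 4 = thetaC2 τ ^ 4 + thetaC4 τ ^ 4 := by
  have hnf := summable_norm_f hτ
  have hng := summable_norm_g hτ
  have hnh := summable_norm_h hτ
  have h3 : thetaC3 τ ^ 4 = ∑' p, Fq τ p := pow_four_eq hnf
  have h2 : thetaC2 τ ^ 4 = ∑' p, Gq τ p := pow_four_eq hng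
  have h4 : thetaC4 τ ^ 4 = ∑' p, Hq τ p := pow_four_eq hnh
  have sF : Summable (Fq τ) := ((hnf.mul_norm hnf).mul_norm (hnf.mul_norm hnf)).of_norm
  have sG : Summable (Gq τ) := ((hng.mul_norm hng).mul_norm (hng.mul_norm hng)).of_norm
  have sH : Summable (Hq τ) := ((hnh.mul_norm hnh).mul_norm (hnh.mul_norm hnh)).of_norm
  rw [h3, h2, h4, split (Fq τ) sF, split (Gq τ) sG, split (Hq τ) sH]
  have e1 : (∑' v, Hq τ (Ω (false, v))) = ∑' v, Fq τ (Ω (false, v)) :=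
    tsum_congr fun v => Hq_false τ v
  have e2 : (∑' v, Hq τ (Ω (true, v))) = -∑' v, Fq τ (Ω (true, v)) := by
    rw [← tsum_neg]; exact tsum_congr fun v => Hq_true τ v
  have e3 : (∑' v, Gq τ (Ω (true, v))) = ∑' v, Gq τ (Ω (false, v)) := by
    rw [← ψ.tsum_eq fun v => Gq τ (Ω (true, v))]
    exact tsum_congr fun v => Gq_psi τ v
  have e4 : (∑' v, Fq τ (Ω (true, v))) = ∑' v, Gq τ (Ω (false, v)) := by
    rw [← φ.tsum_eq fun v => Gq τ (Ω (false, v))]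
    exact tsum_congr fun v => (Gq_phi τ v).symm
  rw [e1, e2, e3, e4]
  ring
end

section
/- Euler's pentagonal number theorem in eta-form: for τ in the upper half-plane, exp(πiτ/12)·∏_{k≥1}(1 - exp(2kπiτ)) = exp(πiτ/12)·∑_{k∈ℤ} (-1)^k exp((3k²+k)πiτ); equivalently ∏_{k≥1}(1 - q²ᵏ) = ∑_{k∈ℤ}(-1)^k q^{3k²+k} with q = exp(πiτ). -/
open Finset Filter Topology

namespace PentagonalAux

private lemma pent_helper (q : ℂ) (n : ℕ) : ∀ m, m ≤ n →
    ∑ s ∈ range (m+1), (-1:ℂ)^s * (∏ i ∈ Ico s n, (1 - q^(2*i+2))) * q^(s*(s+1) + 2*s*n)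
      * (q^(2*s) - 1 - q^(2*n+2+2*s))
    = (-1:ℂ)^(m+1) * (∏ i ∈ Ico m n, (1 - q^(2*i+2))) * q^((m+1)*(m+2) + 2*(m+1)*n) := by
  intro m
  induction m with
  | zero => intro _; rw [Finset.sum_range_one]; ring
  | succ m ih =>
    intro hm
    rw [sum_range_succ, ih (le_of_lt (Nat.lt_of_succ_le hm)),
      Finset.prod_eq_prod_Ico_succ_bot (Nat.lt_of_succ_le hm) (fun i => 1 - q^(2*i+2))]
    ring

private lemma pent_fin (q : ℂ) (n : ℕ) :
    ∑ s ∈ range (n+1), (-1:ℂ)^s * (∏ i ∈ Ico s n, (1 - q^(2*i+2))) * q^(s*(s+1) + 2*s*n)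
    = ∑ j ∈ range (n+1), (-1:ℂ)^j * q^(3*j^2+j)
      + ∑ j ∈ range n, (-1:ℂ)^(j+1) * q^((j+1)*(3*j+2)) := by
  induction n with
  | zero => simp
  | succ n ih =>
    have hsplit : ∀ s ∈ range (n+1),
        (-1:ℂ)^s * (∏ i ∈ Ico s (n+1), (1 - q^(2*i+2))) * q^(s*(s+1) + 2*s*(n+1))
        = (-1:ℂ)^s * (∏ i ∈ Ico s n, (1 - q^(2*i+2))) * q^(s*(s+1) + 2*s*n)
          + (-1:ℂ)^s * (∏ i ∈ Ico s n, (1 - q^(2*i+2))) * q^(s*(s+1) + 2*s*n)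
            * (q^(2*s) - 1 - q^(2*n+2+2*s)) := by
      intro s hs
      rw [Finset.prod_Ico_succ_top (Nat.lt_succ_iff.mp (mem_range.mp hs)) (fun i => 1 - q^(2*i+2))]
      ring
    have e1 : ∑ s ∈ range (n+1+1),
        (-1:ℂ)^s * (∏ i ∈ Ico s (n+1), (1 - q^(2*i+2))) * q^(s*(s+1) + 2*s*(n+1))
        = (∑ s ∈ range (n+1),
            ((-1:ℂ)^s * (∏ i ∈ Ico s n, (1 - q^(2*i+2))) * q^(s*(s+1) + 2*s*n)
            + (-1:ℂ)^s * (∏ i ∈ Ico s n, (1 - q^(2*i+2))) * q^(s*(s+1) + 2*s*n)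
              * (q^(2*s) - 1 - q^(2*n+2+2*s))))
          + (-1:ℂ)^(n+1) * (∏ i ∈ Ico (n+1) (n+1), (1 - q^(2*i+2)))
            * q^((n+1)*((n+1)+1) + 2*(n+1)*(n+1)) := by
      rw [sum_range_succ, sum_congr rfl hsplit]
    have eg : ∑ j ∈ range (n+1+1), (-1:ℂ)^j * q^(3*j^2+j)
        = (∑ j ∈ range (n+1), (-1:ℂ)^j * q^(3*j^2+j)) + (-1:ℂ)^(n+1) * q^(3*(n+1)^2+(n+1)) :=
      sum_range_succ _ _
    have eh : ∑ j ∈ range (n+1), (-1:ℂ)^(j+1) * q^((j+1)*(3*j+2))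
        = (∑ j ∈ range n, (-1:ℂ)^(j+1) * q^((j+1)*(3*j+2))) + (-1:ℂ)^(n+1) * q^((n+1)*(3*n+2)) :=
      sum_range_succ _ _
    rw [e1, sum_add_distrib, ih, pent_helper q n n le_rfl, eg, eh]
    simp only [Finset.Ico_self, Finset.prod_empty]
    ring

private lemma pent_prod_norm_bound (q : ℂ) (hq : ‖q‖ < 1) (s n : ℕ) :
    ∏ i ∈ Ico s n, ‖1 - q^(2*i+2)‖ ≤ Real.exp ((1-‖q‖)⁻¹) := by
  have h0 : (0:ℝ) ≤ ‖q‖ := norm_nonneg q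
  calc ∏ i ∈ Ico s n, ‖1 - q^(2*i+2)‖
      ≤ ∏ i ∈ Ico s n, Real.exp (‖q‖^i) := by
        apply Finset.prod_le_prod (fun i _ => norm_nonneg _)
        intro i _
        calc ‖1 - q^(2*i+2)‖ ≤ ‖(1:ℂ)‖ + ‖q^(2*i+2)‖ := norm_sub_le _ _
          _ = 1 + ‖q‖^(2*i+2) := by rw [norm_one, norm_pow]
          _ ≤ 1 + ‖q‖^i := by
              have := pow_le_pow_of_le_one h0 (le_of_lt hq) (show i ≤ 2*i+2 by omega)
              linarith
          _ ≤ Real.exp (‖q‖^i) := by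
              have := Real.add_one_le_exp (‖q‖^i); linarith
    _ = Real.exp (∑ i ∈ Ico s n, ‖q‖^i) := by rw [Real.exp_sum]
    _ ≤ Real.exp ((1-‖q‖)⁻¹) := by
        apply Real.exp_le_exp.mpr
        have := tsum_geometric_of_lt_one h0 hq
        rw [← this]
        exact Summable.sum_le_tsum _ (fun i _ => pow_nonneg h0 i) (summable_geometric_of_lt_one h0 hq)

private lemma pent_sg (q : ℂ) (hq : ‖q‖ < 1) :
    Summable (fun j : ℕ => (-1:ℂ)^j * q^(3*j^2+j)) := by
  apply Summable.of_norm_bounded (g := fun j => ‖q‖^j) (summable_geometric_of_lt_one (norm_nonneg q) hq)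
  intro j
  rw [norm_mul, norm_pow, norm_pow, norm_neg, norm_one, one_pow, one_mul]
  exact pow_le_pow_of_le_one (norm_nonneg q) (le_of_lt hq) (by nlinarith)

private lemma pent_sh (q : ℂ) (hq : ‖q‖ < 1) :
    Summable (fun j : ℕ => (-1:ℂ)^(j+1) * q^((j+1)*(3*j+2))) := by
  apply Summable.of_norm_bounded (g := fun j => ‖q‖^j) (summable_geometric_of_lt_one (norm_nonneg q) hq)
  intro j
  rw [norm_mul, norm_pow, norm_pow, norm_neg, norm_one, one_pow, one_mul]
  exact pow_le_pow_of_le_one (norm_nonneg q) (le_of_lt hq) (by nlinarith)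

private lemma pent_mult (q : ℂ) (hq : ‖q‖ < 1) :
    Multipliable (fun k : ℕ => 1 - q^(2*k+2)) := by
  have h0 : (0:ℝ) ≤ ‖q‖ := norm_nonneg q
  have hlt : ∀ k : ℕ, ‖q^(2*k+2)‖ < 1 := by
    intro k; rw [norm_pow]; exact pow_lt_one₀ h0 hq (by omega)
  have hne : ∀ (x : Unit) (k : ℕ), (fun k (_ : Unit) => 1 - q^(2*k+2)) k x ≠ 0 := by
    intro _ k h
    rw [sub_eq_zero] at h
    have := hlt k
    rw [← h] at this; simp at this
  have hs : Summable (fun k : ℕ => -q^(2*k+2)) :=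
    (summable_geometric_of_lt_one h0 hq).of_norm_bounded (fun n => by
      rw [norm_neg, norm_pow]; exact pow_le_pow_of_le_one h0 (le_of_lt hq) (by omega))
  simpa [sub_eq_add_neg] using Complex.multipliable_one_add_of_summable hs

private lemma pent_q (q : ℂ) (hq : ‖q‖ < 1) :
    ∏' k : ℕ, (1 - q^(2*k+2))
      = (∑' j : ℕ, (-1:ℂ)^j * q^(3*j^2+j)) + ∑' j : ℕ, (-1:ℂ)^(j+1) * q^((j+1)*(3*j+2)) := by
  have pent_fin := pent_fin q
  have hC := pent_prod_norm_bound q hq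
  have sg := pent_sg q hq
  have sh := pent_sh q hq
  have mult := pent_mult q hq
  have h0 : (0:ℝ) ≤ ‖q‖ := norm_nonneg q
  have h1q : (0:ℝ) < 1 - ‖q‖ := by linarith
  set C := Real.exp ((1-‖q‖)⁻¹) with hCdef
  set F : ℕ → ℂ := fun n =>
    ∑ s ∈ range (n+1), (-1:ℂ)^s * (∏ i ∈ Ico s n, (1 - q^(2*i+2))) * q^(s*(s+1) + 2*s*n)
    with hF
  set P : ℕ → ℂ := fun n => ∏ i ∈ range n, (1 - q^(2*i+2)) with hPdef
  -- ‖F n - P n‖ small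
  have hFP : ∀ n, ‖F n - P n‖ ≤ C * (1-‖q‖)⁻¹ * ‖q‖^n := by
    intro n
    have hsplit : F n = (∑ i ∈ range n,
        (-1:ℂ)^(i+1) * (∏ j ∈ Ico (i+1) n, (1 - q^(2*j+2))) * q^((i+1)*((i+1)+1) + 2*(i+1)*n))
        + P n := by
      simp only [hF]
      rw [Finset.sum_range_succ' (fun s =>
        (-1:ℂ)^s * (∏ i ∈ Ico s n, (1 - q^(2*i+2))) * q^(s*(s+1) + 2*s*n)) n]
      congr 1
      simp only [hPdef, pow_zero, one_mul, mul_one, Nat.zero_mul, Nat.mul_zero, Nat.add_zero,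
        Finset.range_eq_Ico]
    have : F n - P n = ∑ i ∈ range n,
        (-1:ℂ)^(i+1) * (∏ j ∈ Ico (i+1) n, (1 - q^(2*j+2))) * q^((i+1)*((i+1)+1) + 2*(i+1)*n) := by
      rw [hsplit]; ring
    rw [this]
    calc ‖∑ i ∈ range n,
        (-1:ℂ)^(i+1) * (∏ j ∈ Ico (i+1) n, (1 - q^(2*j+2))) * q^((i+1)*((i+1)+1) + 2*(i+1)*n)‖
        ≤ ∑ i ∈ range n, ‖(-1:ℂ)^(i+1) * (∏ j ∈ Ico (i+1) n, (1 - q^(2*j+2)))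
            * q^((i+1)*((i+1)+1) + 2*(i+1)*n)‖ := norm_sum_le _ _
      _ ≤ ∑ i ∈ range n, C * (‖q‖^n * ‖q‖^i) := by
          apply Finset.sum_le_sum
          intro i _
          rw [norm_mul, norm_mul, norm_pow, norm_pow, norm_neg, norm_one, one_pow, one_mul]
          have e1 : ‖∏ j ∈ Ico (i+1) n, (1 - q^(2*j+2))‖ ≤ C := by
            rw [norm_prod]; exact hC (i+1) n
          have e2 : ‖q‖^((i+1)*((i+1)+1) + 2*(i+1)*n) ≤ ‖q‖^n * ‖q‖^i := by
            rw [← pow_add]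
            exact pow_le_pow_of_le_one h0 (le_of_lt hq) (by nlinarith)
          exact mul_le_mul e1 e2 (pow_nonneg h0 _) (le_of_lt (Real.exp_pos _))
      _ = C * ‖q‖^n * ∑ i ∈ range n, ‖q‖^i := by rw [Finset.mul_sum]; ring_nf
      _ ≤ C * ‖q‖^n * (1-‖q‖)⁻¹ := by
          apply mul_le_mul_of_nonneg_left _ (by positivity)
          rw [← tsum_geometric_of_lt_one h0 hq]
          exact Summable.sum_le_tsum _ (fun i _ => pow_nonneg h0 i) (summable_geometric_of_lt_one h0 hq)
      _ = C * (1-‖q‖)⁻¹ * ‖q‖^n := by ring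
  have hdiff : Tendsto (fun n => F n - P n) atTop (𝓝 0) := by
    rw [tendsto_zero_iff_norm_tendsto_zero]
    apply squeeze_zero (fun n => norm_nonneg _) hFP
    have := (tendsto_pow_atTop_nhds_zero_of_lt_one h0 hq).const_mul (C * (1-‖q‖)⁻¹)
    simpa using this
  have hP : Tendsto P atTop (𝓝 (∏' k : ℕ, (1 - q^(2*k+2)))) :=
    mult.hasProd.tendsto_prod_nat
  have hFten : Tendsto F atTop (𝓝 (∏' k : ℕ, (1 - q^(2*k+2)))) := by
    have : F = fun n => P n + (F n - P n) := funext fun n => by ring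
    rw [this]
    simpa using hP.add hdiff
  have hG : Tendsto (fun n => ∑ j ∈ range (n+1), (-1:ℂ)^j * q^(3*j^2+j)) atTop
      (𝓝 (∑' j : ℕ, (-1:ℂ)^j * q^(3*j^2+j))) :=
    sg.hasSum.tendsto_sum_nat.comp (tendsto_add_atTop_nat 1)
  have hH : Tendsto (fun n => ∑ j ∈ range n, (-1:ℂ)^(j+1) * q^((j+1)*(3*j+2))) atTop
      (𝓝 (∑' j : ℕ, (-1:ℂ)^(j+1) * q^((j+1)*(3*j+2)))) :=
    sh.hasSum.tendsto_sum_nat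
  have hFten2 : Tendsto F atTop
      (𝓝 ((∑' j : ℕ, (-1:ℂ)^j * q^(3*j^2+j)) + ∑' j : ℕ, (-1:ℂ)^(j+1) * q^((j+1)*(3*j+2)))) := by
    have : F = fun n => (∑ j ∈ range (n+1), (-1:ℂ)^j * q^(3*j^2+j))
        + ∑ j ∈ range n, (-1:ℂ)^(j+1) * q^((j+1)*(3*j+2)) := funext fun n => pent_fin n
    rw [this]
    exact hG.add hH
  exact tendsto_nhds_unique hFten hFten2

end PentagonalAux

open Complex PentagonalAux

/-- Euler's pentagonal number theorem in eta-form. -/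
theorem pentagonal_number_theorem_eta (τ : ℂ) (hτ : 0 < τ.im) :
    Complex.exp ((Real.pi : ℂ) * I * τ / 12) *
        ∏' k : ℕ, (1 - Complex.exp (2 * ((k : ℂ) + 1) * (Real.pi : ℂ) * I * τ))
      = Complex.exp ((Real.pi : ℂ) * I * τ / 12) *
        ∑' k : ℤ, (-1 : ℂ) ^ k
          * Complex.exp ((3 * (k : ℂ) ^ 2 + (k : ℂ)) * (Real.pi : ℂ) * I * τ) := by
  set q : ℂ := Complex.exp ((Real.pi : ℂ) * I * τ) with hqdef
  have hq : ‖q‖ < 1 := by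
    rw [hqdef, Complex.norm_exp]
    rw [Real.exp_lt_one_iff]
    have : ((Real.pi : ℂ) * I * τ).re = -(Real.pi * τ.im) := by
      simp [Complex.mul_re, Complex.mul_im]
    rw [this]
    have := Real.pi_pos
    nlinarith
  have hqpow : ∀ m : ℕ, q ^ m = Complex.exp ((m : ℂ) * ((Real.pi : ℂ) * I * τ)) := by
    intro m; rw [Complex.exp_nat_mul]
  congr 1
  have hprod : (∏' k : ℕ, (1 - Complex.exp (2 * ((k : ℂ) + 1) * (Real.pi : ℂ) * I * τ)))
      = ∏' k : ℕ, (1 - q^(2*k+2)) := by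
    apply tprod_congr
    intro k
    rw [hqpow (2*k+2)]
    congr 2
    push_cast
    ring
  have hg : HasSum (fun j : ℕ => (-1 : ℂ) ^ ((j : ℤ))
      * Complex.exp ((3 * ((j : ℤ) : ℂ) ^ 2 + ((j : ℤ) : ℂ)) * (Real.pi : ℂ) * I * τ))
      (∑' j : ℕ, (-1:ℂ)^j * q^(3*j^2+j)) := by
    have he : (fun j : ℕ => (-1 : ℂ) ^ ((j : ℤ))
        * Complex.exp ((3 * ((j : ℤ) : ℂ) ^ 2 + ((j : ℤ) : ℂ)) * (Real.pi : ℂ) * I * τ))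
        = fun j : ℕ => (-1:ℂ)^j * q^(3*j^2+j) := by
      funext j
      rw [zpow_natCast, hqpow (3*j^2+j)]
      congr 2
      push_cast
      ring
    rw [he]
    exact (pent_sg q hq).hasSum
  have hh : HasSum (fun j : ℕ => (-1 : ℂ) ^ ((-(j+1) : ℤ))
      * Complex.exp ((3 * ((-(j+1) : ℤ) : ℂ) ^ 2 + ((-(j+1) : ℤ) : ℂ)) * (Real.pi : ℂ) * I * τ))
      (∑' j : ℕ, (-1:ℂ)^(j+1) * q^((j+1)*(3*j+2))) := by
    have he : (fun j : ℕ => (-1 : ℂ) ^ ((-(j+1) : ℤ))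
        * Complex.exp ((3 * ((-(j+1) : ℤ) : ℂ) ^ 2 + ((-(j+1) : ℤ) : ℂ)) * (Real.pi : ℂ) * I * τ))
        = fun j : ℕ => (-1:ℂ)^(j+1) * q^((j+1)*(3*j+2)) := by
      funext j
      have hsgn : (-1 : ℂ) ^ ((-(j+1) : ℤ)) = (-1:ℂ)^(j+1) := by
        have : ((-(j+1)) : ℤ) = -(((j+1 : ℕ)) : ℤ) := by push_cast; ring
        rw [this, zpow_neg, zpow_natCast, ← inv_pow, inv_neg, inv_one]
      rw [hsgn, hqpow ((j+1)*(3*j+2))]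
      congr 2
      push_cast
      ring
    rw [he]
    exact (pent_sh q hq).hasSum
  have hsum : (∑' k : ℤ, (-1 : ℂ) ^ k
      * Complex.exp ((3 * (k : ℂ) ^ 2 + (k : ℂ)) * (Real.pi : ℂ) * I * τ))
      = (∑' j : ℕ, (-1:ℂ)^j * q^(3*j^2+j)) + ∑' j : ℕ, (-1:ℂ)^(j+1) * q^((j+1)*(3*j+2)) :=
    (HasSum.of_nat_of_neg_add_one (f := fun k : ℤ => (-1 : ℂ) ^ k
      * Complex.exp ((3 * (k : ℂ) ^ 2 + (k : ℂ)) * (Real.pi : ℂ) * I * τ)) hg hh).tsum_eq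
  rw [hprod, hsum, pent_q q hq]
end

section
/- Suppose differentiable functions ϑ₂, ϑ₃, ϑ₄, η of τ satisfy the system dϑ₂/dτ = (i/π){η + (π²/12)(ϑ₃⁴+ϑ₄⁴)}ϑ₂, dϑ₃/dτ = (i/π){η + (π²/12)(ϑ₃⁴+ϑ₄⁴ − 3B⁴ϑ₄⁴)}ϑ₃, dϑ₄/dτ = (i/π){η + (π²/12)(ϑ₃⁴+ϑ₄⁴ − 3A⁴ϑ₃⁴)}ϑ₄ for constants A, B, and ϑ₂ never vanishes. Then the quantity 𝔄⁴ := (A⁴ϑ₃⁴ − B⁴ϑ₄⁴)/ϑ₂⁴ is constant in τ, i.e. its derivative vanishes identically. -/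
open Complex

/-- The quantity 𝔄⁴ = (A⁴ϑ₃⁴ − B⁴ϑ₄⁴)/ϑ₂⁴ is an algebraic integral of the
    non-canonical ϑ-constant system. -/
theorem frakA_is_integral (I' : Set ℂ) (hI : IsOpen I')
    (t2 t3 t4 η : ℂ → ℂ) (A B : ℂ)
    (h2ne : ∀ τ ∈ I', t2 τ ≠ 0)
    (h2 : ∀ τ ∈ I', HasDerivAt t2
      ((I / (Real.pi : ℂ)) * (η τ + (Real.pi : ℂ) ^ 2 / 12 * (t3 τ ^ 4 + t4 τ ^ 4)) * t2 τ) τ)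
    (h3 : ∀ τ ∈ I', HasDerivAt t3
      ((I / (Real.pi : ℂ)) * (η τ + (Real.pi : ℂ) ^ 2 / 12 *
        (t3 τ ^ 4 + t4 τ ^ 4 - 3 * B ^ 4 * t4 τ ^ 4)) * t3 τ) τ)
    (h4 : ∀ τ ∈ I', HasDerivAt t4
      ((I / (Real.pi : ℂ)) * (η τ + (Real.pi : ℂ) ^ 2 / 12 *
        (t3 τ ^ 4 + t4 τ ^ 4 - 3 * A ^ 4 * t3 τ ^ 4)) * t4 τ) τ) :
    ∀ τ ∈ I', HasDerivAt
      (fun s => (A ^ 4 * t3 s ^ 4 - B ^ 4 * t4 s ^ 4) / t2 s ^ 4) 0 τ := by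
  intro τ hτ
  have d2 := h2 τ hτ
  have d3 := h3 τ hτ
  have d4 := h4 τ hτ
  have hne : t2 τ ^ 4 ≠ 0 := pow_ne_zero 4 (h2ne τ hτ)
  have hnum : HasDerivAt (fun s => A ^ 4 * t3 s ^ 4 - B ^ 4 * t4 s ^ 4)
      (A ^ 4 * (4 * t3 τ ^ 3 *
        ((I / (Real.pi : ℂ)) * (η τ + (Real.pi : ℂ) ^ 2 / 12 *
          (t3 τ ^ 4 + t4 τ ^ 4 - 3 * B ^ 4 * t4 τ ^ 4)) * t3 τ)) -
       B ^ 4 * (4 * t4 τ ^ 3 *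
        ((I / (Real.pi : ℂ)) * (η τ + (Real.pi : ℂ) ^ 2 / 12 *
          (t3 τ ^ 4 + t4 τ ^ 4 - 3 * A ^ 4 * t3 τ ^ 4)) * t4 τ))) τ := by
    have h3' := (d3.fun_pow 4).const_mul (A ^ 4)
    have h4' := (d4.fun_pow 4).const_mul (B ^ 4)
    simpa [Nat.cast_ofNat, mul_comm, mul_assoc, mul_left_comm] using h3'.fun_sub h4'
  have hden : HasDerivAt (fun s => t2 s ^ 4)
      (4 * t2 τ ^ 3 *
        ((I / (Real.pi : ℂ)) * (η τ + (Real.pi : ℂ) ^ 2 / 12 *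
          (t3 τ ^ 4 + t4 τ ^ 4)) * t2 τ)) τ := by
    simpa [Nat.cast_ofNat, mul_comm, mul_assoc, mul_left_comm] using d2.fun_pow 4
  have := hnum.fun_div hden hne
  refine this.congr_deriv ?_
  rw [div_eq_zero_iff, or_iff_left (pow_ne_zero 2 hne)]
  ring
end

section
/- Suppose differentiable functions θ₁, θ₂, θ₃, θ₄, θ₁' of z satisfy the system ∂θ₁/∂z = θ₁', ∂θₖ/∂z = (θ₁'/θ₁)θₖ − π ϑₖ²·(θ_ν θ_μ)/θ₁ for (k,ν,μ) ∈ {(2,3,4),(3,4,2),(4,2,3)} with constants ϑ₂, ϑ₃, ϑ₄, and θ₁ never vanishes. Then the quantity (ϑ₂²θ₄² − ϑ₄²θ₂²)/θ₁² is constant in z (its z-derivative vanishes identically). -/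
open Complex

/-- The quadratic Jacobi identity (ϑ₂²θ₄² − ϑ₄²θ₂²)/θ₁² is an algebraic integral of
    the z-differential system for theta-functions (Theorem 7.1). -/
theorem theta_quadratic_integral (U : Set ℂ) (hU : IsOpen U) (hUconn : IsConnected U)
    (t1 t2 t3 t4 t1' : ℂ → ℂ) (v2 v3 v4 : ℂ)
    (h1ne : ∀ z ∈ U, t1 z ≠ 0)
    (h1 : ∀ z ∈ U, HasDerivAt t1 (t1' z) z)
    (h2 : ∀ z ∈ U, HasDerivAt t2
      (t1' z / t1 z * t2 z - (Real.pi : ℂ) * v2 ^ 2 * (t3 z * t4 z) / t1 z) z)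
    (h3 : ∀ z ∈ U, HasDerivAt t3
      (t1' z / t1 z * t3 z - (Real.pi : ℂ) * v3 ^ 2 * (t4 z * t2 z) / t1 z) z)
    (h4 : ∀ z ∈ U, HasDerivAt t4
      (t1' z / t1 z * t4 z - (Real.pi : ℂ) * v4 ^ 2 * (t2 z * t3 z) / t1 z) z) :
    ∀ z ∈ U, HasDerivAt
      (fun w => (v2 ^ 2 * t4 w ^ 2 - v4 ^ 2 * t2 w ^ 2) / t1 w ^ 2) 0 z := by
  intro z hz
  have hne := h1ne z hz
  have hd := ((((h4 z hz).pow 2).const_mul (v2 ^ 2)).sub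
      (((h2 z hz).pow 2).const_mul (v4 ^ 2))).div ((h1 z hz).pow 2) (pow_ne_zero 2 hne)
  refine hd.congr_deriv ?_
  simp only [Pi.pow_apply, Pi.sub_apply]
  field_simp
  ring
end
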